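/- Let ω = ω₁⋯ω_m ∈ {0,1}^m with ω_m = 1, and define ψ(ω) = ω₁⋯ω_m(1−ω₁)⋯(1−ω_{m-1})1, a word of length 2m. Then L(ω) = R(ψ(ω)), i.e., (2^m+1)/(x_m+1) = (2^{2m}−1)/(x_{2m}−1), where x_m and x_{2m} are the integers whose binary representations are ω and ψ(ω) respectively. -/

import Mathlib

open Finset

lemma geom2 (n : ℕ) : ∑ j ∈ range n, (2:ℝ)^(n-j) = 2^(n+1) - 2 := by
  induction n with
  | zero => simp
  | succ n ih =>
    rw [Finset.sum_range_succ']
    simp only [Nat.succ_sub_succ, Nat.sub_zero]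
    rw [ih]
    ring

theorem stmt14 (m : ℕ) (hm : 0 < m) (ω : ℕ → ℝ) (hω : ∀ j < m, ω j = 0 ∨ ω j = 1)
    (hlast : ω (m-1) = 1) :
    ((2:ℝ)^m + 1) / ((∑ j ∈ Finset.range m, ω j * 2^(m-1-j)) + 1)
      = ((2:ℝ)^(2*m) - 1) /
        (((∑ j ∈ Finset.range m, ω j * 2^(m-1-j)) * 2^m
          + (∑ j ∈ Finset.range (m-1), (1 - ω j) * 2^(m-1-j)) + 1) - 1) := by
  obtain ⟨n, rfl⟩ := Nat.exists_eq_succ_of_ne_zero hm.ne'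
  simp only [Nat.succ_eq_add_one, Nat.add_sub_cancel, Nat.succ_sub_one] at hlast ⊢
  set A := ∑ j ∈ range (n+1), ω j * 2^(n-j) with hA
  set B := ∑ j ∈ range n, (1 - ω j) * 2^(n-j) with hB
  have hA1 : A = (∑ j ∈ range n, ω j * 2^(n-j)) + 1 := by
    rw [hA, Finset.sum_range_succ, Nat.sub_self, hlast]; ring
  have hAB : A + B = 2^(n+1) - 1 := by
    have h3 : ∑ j ∈ range n, (ω j * 2^(n-j) + (1 - ω j) * 2^(n-j))
        = ∑ j ∈ range n, (2:ℝ)^(n-j) :=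
      Finset.sum_congr rfl fun j _ => by ring
    calc A + B = (∑ j ∈ range n, (ω j * 2^(n-j) + (1 - ω j) * 2^(n-j))) + 1 := by
          rw [hA1, hB, Finset.sum_add_distrib]; ring
      _ = 2^(n+1) - 1 := by rw [h3, geom2]; ring
  have hA0 : 0 ≤ A := by
    apply Finset.sum_nonneg
    intro j hj
    rcases hω j (Finset.mem_range.mp hj) with h | h <;> rw [h] <;> positivity
  have h1 : A + 1 ≠ 0 := by positivity
  have h2 : (2:ℝ)^(n+1) - 1 ≠ 0 := by
    have : (1:ℝ) < 2^(n+1) := one_lt_pow₀ one_lt_two (Nat.succ_ne_zero n)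
    linarith
  have hB2 : B = 2^(n+1) - 1 - A := by linarith
  rw [hB2]
  have hden : A * 2^(n+1) + (2^(n+1) - 1 - A) + 1 - 1 = (A + 1) * (2^(n+1) - 1) := by ring
  have hexp : 2*(n+1) = (n+1)+(n+1) := two_mul _
  rw [hden, div_eq_div_iff h1 (mul_ne_zero h1 h2), hexp, pow_add]
  ring
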